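/- Let X be a formal vector field in Poincaré–Dulac normal form with semisimple linear part S_λ. Then for every β ∈ R, if S_λ(X(β)) = 0 then S_λ(β) = 0. -/

import Mathlib

open Finset

noncomputable def psPderiv {n : ℕ} (j : Fin n) (F : MvPowerSeries (Fin n) ℂ) :
    MvPowerSeries (Fin n) ℂ :=
  fun a => ((a j + 1 : ℕ) : ℂ) * MvPowerSeries.coeff (a + Finsupp.single j 1) F

noncomputable def vfApply {n : ℕ} (V : Fin n → MvPowerSeries (Fin n) ℂ)
    (F : MvPowerSeries (Fin n) ℂ) : MvPowerSeries (Fin n) ℂ :=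
  ∑ j, V j * psPderiv j F

noncomputable def vfLie {n : ℕ} (U V : Fin n → MvPowerSeries (Fin n) ℂ) :
    Fin n → MvPowerSeries (Fin n) ℂ :=
  fun j => vfApply U (V j) - vfApply V (U j)

noncomputable def diagVF {n : ℕ} (lam : Fin n → ℂ) : Fin n → MvPowerSeries (Fin n) ℂ :=
  fun j => MvPowerSeries.C (σ := Fin n) (R := ℂ) (lam j) * MvPowerSeries.X j

def IsPDNormalForm {n : ℕ} (lam : Fin n → ℂ) (Xf : Fin n → MvPowerSeries (Fin n) ℂ) : Prop :=
  (∀ j, MvPowerSeries.coeff (R := ℂ) 0 (Xf j) = 0) ∧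
  (∃ A : Matrix (Fin n) (Fin n) ℂ, IsNilpotent A ∧
      A * Matrix.diagonal lam = Matrix.diagonal lam * A ∧
      ∀ j l, MvPowerSeries.coeff (R := ℂ) (Finsupp.single l 1) (Xf j)
        = (if l = j then lam j else 0) + A j l) ∧
  (∀ j, vfLie (diagVF lam) Xf j = 0)

namespace PDaux

open MvPowerSeries

variable {n : ℕ}

noncomputable def wt (lam : Fin n → ℂ) (a : Fin n →₀ ℕ) : ℂ := ∑ j, (a j : ℂ) * lam j

def deg (a : Fin n →₀ ℕ) : ℕ := ∑ j, a j

lemma coeff_psPderiv (j : Fin n) (F : MvPowerSeries (Fin n) ℂ) (a : Fin n →₀ ℕ) :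
    MvPowerSeries.coeff (R := ℂ) a (psPderiv j F)
      = ((a j + 1 : ℕ) : ℂ) * MvPowerSeries.coeff (R := ℂ) (a + Finsupp.single j 1) F := rfl

lemma diagVF_eq (lam : Fin n → ℂ) (j : Fin n) :
    diagVF lam j = MvPowerSeries.monomial (R := ℂ) (Finsupp.single j 1) (lam j) := by
  rw [diagVF, MvPowerSeries.X, ← MvPowerSeries.monomial_zero_eq_C_apply,
    MvPowerSeries.monomial_mul_monomial, zero_add, mul_one]

lemma coeff_vfApply (V : Fin n → MvPowerSeries (Fin n) ℂ) (F : MvPowerSeries (Fin n) ℂ)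
    (a : Fin n →₀ ℕ) :
    MvPowerSeries.coeff (R := ℂ) a (vfApply V F)
      = ∑ j, MvPowerSeries.coeff (R := ℂ) a (V j * psPderiv j F) := by
  rw [vfApply, map_sum]

lemma wt_add (lam : Fin n → ℂ) (a b : Fin n →₀ ℕ) : wt lam (a + b) = wt lam a + wt lam b := by
  simp [wt, add_mul, Finset.sum_add_distrib]

lemma wt_single (lam : Fin n → ℂ) (l : Fin n) : wt lam (Finsupp.single l 1) = lam l := by
  simp [wt, Finsupp.single_apply]

lemma deg_add (a b : Fin n →₀ ℕ) : deg (a + b) = deg a + deg b := by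
  simp [deg, Finset.sum_add_distrib]

lemma deg_single (l : Fin n) : deg (Finsupp.single l 1) = 1 := by
  simp [deg, Finsupp.single_apply]

lemma deg_eq_zero {a : Fin n →₀ ℕ} (h : deg a = 0) : a = 0 := by
  rw [deg, Finset.sum_eq_zero_iff] at h
  ext j; exact h j (Finset.mem_univ j)

lemma eq_single_of_deg_one {a : Fin n →₀ ℕ} (h : deg a = 1) :
    ∃ l, a = Finsupp.single l 1 := by
  rw [deg] at h
  obtain ⟨l, -, hl⟩ := Finset.exists_ne_zero_of_sum_ne_zero (by omega : ∑ j, a j ≠ 0)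
  refine ⟨l, ?_⟩
  have h2 : a l ≤ ∑ j, a j := Finset.single_le_sum (fun i _ => Nat.zero_le _) (Finset.mem_univ l)
  have hle : a l ≤ 1 := by omega
  have hal : a l = 1 := by omega
  ext j
  rcases eq_or_ne j l with rfl | hj
  · simp [hal]
  · have : ∑ j, a j = a l + ∑ j ∈ univ.erase l, a j := by
      rw [add_comm, Finset.sum_erase_add _ _ (Finset.mem_univ l)]
    have hz : ∑ j ∈ univ.erase l, a j = 0 := by omega
    rw [Finset.sum_eq_zero_iff] at hz
    have := hz j (Finset.mem_erase.2 ⟨hj, Finset.mem_univ j⟩)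
    simp [Finsupp.single_apply, Ne.symm hj, this]

-- S_lambda acts diagonally
lemma coeff_S (lam : Fin n → ℂ) (F : MvPowerSeries (Fin n) ℂ) (a : Fin n →₀ ℕ) :
    MvPowerSeries.coeff (R := ℂ) a (vfApply (diagVF lam) F) = wt lam a * MvPowerSeries.coeff (R := ℂ) a F := by
  rw [coeff_vfApply, wt, Finset.sum_mul]
  refine Finset.sum_congr rfl fun j _ => ?_
  rw [diagVF_eq, MvPowerSeries.coeff_monomial_mul]
  by_cases hle : Finsupp.single j 1 ≤ a
  · rw [if_pos hle, coeff_psPderiv, tsub_add_cancel_of_le hle]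
    have h1 : (1:ℕ) ≤ a j := by simpa [Finsupp.single_le_iff] using hle
    have hj : ((a - Finsupp.single j 1 : Fin n →₀ ℕ) j + 1 : ℕ) = a j := by
      rw [Finsupp.tsub_apply, Finsupp.single_apply, if_pos rfl]; omega
    rw [hj]; ring
  · rw [if_neg hle]
    have h1 : a j = 0 := by
      by_contra h
      exact hle (by simpa [Finsupp.single_le_iff] using Nat.one_le_iff_ne_zero.2 h)
    simp [h1]

end PDaux

namespace PDaux
open MvPowerSeries
variable {n : ℕ}

lemma add_single_eq_single {b : Fin n →₀ ℕ} {k j : Fin n}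
    (h : b + Finsupp.single k 1 = Finsupp.single j 1) : b = 0 ∧ k = j := by
  have hk : b k + 1 = Finsupp.single j 1 k := by
    have := congrFun (congrArg (fun f : Fin n →₀ ℕ => (f : Fin n → ℕ)) h) k
    simpa [Finsupp.single_apply] using this
  have hkj : k = j := by
    by_contra hne
    rw [Finsupp.single_apply, if_neg (Ne.symm hne)] at hk
    omega
  subst hkj
  refine ⟨?_, rfl⟩
  have := add_right_cancel (a := b) (b := Finsupp.single k 1) (c := 0)
  exact this (by simpa using h)

lemma psPderiv_diagVF (lam : Fin n → ℂ) (k j : Fin n) :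
    psPderiv k (diagVF lam j) = if k = j then MvPowerSeries.C (σ := Fin n) (R := ℂ) (lam j) else 0 := by
  ext a
  rw [coeff_psPderiv, diagVF_eq, MvPowerSeries.coeff_monomial]
  by_cases h : a + Finsupp.single k 1 = Finsupp.single j 1
  · obtain ⟨rfl, rfl⟩ := add_single_eq_single h
    simp
  · rw [if_neg h, mul_zero]
    by_cases hkj : k = j
    · subst hkj
      rw [if_pos rfl, MvPowerSeries.coeff_C]
      have : a ≠ 0 := by rintro rfl; exact h (by simp)
      rw [if_neg this]
    · rw [if_neg hkj, map_zero]

lemma vfApply_diagVF (Xf : Fin n → MvPowerSeries (Fin n) ℂ) (lam : Fin n → ℂ) (j : Fin n) :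
    vfApply Xf (diagVF lam j) = Xf j * MvPowerSeries.C (σ := Fin n) (R := ℂ) (lam j) := by
  rw [vfApply]
  rw [Finset.sum_eq_single j]
  · rw [psPderiv_diagVF, if_pos rfl]
  · intro k _ hk
    rw [psPderiv_diagVF, if_neg hk, mul_zero]
  · intro h; exact absurd (Finset.mem_univ j) h

end PDaux

namespace PDaux
open MvPowerSeries
variable {n : ℕ}

lemma resonance {lam : Fin n → ℂ} {Xf : Fin n → MvPowerSeries (Fin n) ℂ}
    (hLie : ∀ j, vfLie (diagVF lam) Xf j = 0) :
    ∀ j a, wt lam a ≠ lam j → MvPowerSeries.coeff (R := ℂ) a (Xf j) = 0 := by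
  intro j a hw
  have h := congrArg (MvPowerSeries.coeff (R := ℂ) a) (hLie j)
  rw [vfLie, map_sub, map_zero, coeff_S, vfApply_diagVF, MvPowerSeries.coeff_mul_C,
    sub_eq_zero] at h
  by_contra hne
  have h2 : (wt lam a - lam j) * MvPowerSeries.coeff (R := ℂ) a (Xf j) = 0 := by linear_combination h
  rcases mul_eq_zero.1 h2 with h3 | h3
  · exact hw (sub_eq_zero.1 h3)
  · exact hne h3

lemma A_resonance {lam : Fin n → ℂ} {A : Matrix (Fin n) (Fin n) ℂ}
    (hA : A * Matrix.diagonal lam = Matrix.diagonal lam * A) :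
    ∀ j l, A j l ≠ 0 → lam j = lam l := by
  intro j l hne
  have := congrFun (congrFun hA j) l
  rw [Matrix.mul_diagonal, Matrix.diagonal_mul] at this
  have : (lam l - lam j) * A j l = 0 := by ring_nf; linear_combination this
  rcases mul_eq_zero.1 this with h | h
  · exact (sub_eq_zero.1 h).symm
  · exact absurd h hne

end PDaux

namespace PDaux
open MvPowerSeries
variable {n : ℕ}

noncomputable def fact (a : Fin n →₀ ℕ) : ℕ := ∏ j, (a j).factorial

lemma fact_ne_zero (a : Fin n →₀ ℕ) : fact a ≠ 0 :=
  (Finset.prod_pos fun j _ => (a j).factorial_pos).ne'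

lemma fact_add_single (b : Fin n →₀ ℕ) (s : Fin n) :
    fact (b + Finsupp.single s 1) = (b s + 1) * fact b := by
  rw [fact, fact, ← Finset.mul_prod_erase univ _ (Finset.mem_univ s),
    ← Finset.mul_prod_erase univ (fun j => (b j).factorial) (Finset.mem_univ s)]
  have h1 : (((b + Finsupp.single s 1 : Fin n →₀ ℕ)) s).factorial = (b s + 1) * (b s).factorial := by
    rw [Finsupp.add_apply, Finsupp.single_apply, if_pos rfl, Nat.factorial_succ]
  rw [h1]
  have h2 : ∀ j ∈ univ.erase s, (((b + Finsupp.single s 1 : Fin n →₀ ℕ)) j).factorial = (b j).factorial := by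
    intro j hj
    have hne : j ≠ s := (Finset.mem_erase.1 hj).1
    rw [Finsupp.add_apply, Finsupp.single_apply, if_neg (Ne.symm hne), add_zero]
  rw [Finset.prod_congr rfl h2]
  ring

noncomputable def cnt {d : ℕ} (f : Fin d → Fin n) : Fin n →₀ ℕ := ∑ i, Finsupp.single (f i) 1

lemma cnt_apply {d : ℕ} (f : Fin d → Fin n) (l : Fin n) :
    cnt f l = ∑ i, if f i = l then 1 else 0 := by
  rw [cnt, Finsupp.finset_sum_apply]
  exact Finset.sum_congr rfl fun i _ => by simp [Finsupp.single_apply]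

lemma cnt_decomp {d : ℕ} (f : Fin d → Fin n) (i : Fin d) :
    cnt f = Finsupp.single (f i) 1 + ∑ i' ∈ univ.erase i, Finsupp.single (f i') 1 :=
  (Finset.add_sum_erase univ (fun x => Finsupp.single (f x) 1) (Finset.mem_univ i)).symm

lemma cnt_update {d : ℕ} (f : Fin d → Fin n) (i : Fin d) (s : Fin n) :
    cnt (Function.update f i s)
      = Finsupp.single s 1 + ∑ i' ∈ univ.erase i, Finsupp.single (f i') 1 := by
  rw [cnt, ← Finset.add_sum_erase univ (fun x => Finsupp.single (Function.update f i s x) 1)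
    (Finset.mem_univ i)]
  rw [Function.update_self]
  congr 1
  refine Finset.sum_congr rfl fun i' hi' => ?_
  rw [Function.update_of_ne (Finset.mem_erase.1 hi').1]

lemma deg_cnt {d : ℕ} (f : Fin d → Fin n) : deg (cnt f) = d := by
  rw [deg]
  have : ∀ j, cnt f j = ∑ i, if f i = j then 1 else 0 := cnt_apply f
  calc ∑ j, cnt f j = ∑ j, ∑ i : Fin d, if f i = j then 1 else 0 :=
        Finset.sum_congr rfl fun j _ => this j
    _ = ∑ i : Fin d, ∑ j, if f i = j then 1 else 0 := Finset.sum_comm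
    _ = ∑ i : Fin d, 1 := Finset.sum_congr rfl fun i _ => by simp
    _ = d := by simp

lemma exists_tuple : ∀ (d : ℕ) (a : Fin n →₀ ℕ), deg a = d → ∃ f : Fin d → Fin n, cnt f = a := by
  intro d
  induction d with
  | zero =>
    intro a ha
    exact ⟨Fin.elim0, by rw [deg_eq_zero ha]; simp [cnt]⟩
  | succ d ih =>
    intro a ha
    have hex : ∃ l, a l ≠ 0 := by
      by_contra hall
      push_neg at hall
      have : a = 0 := Finsupp.ext fun l => hall l
      rw [this] at ha
      simp [deg] at ha
    obtain ⟨l, hl⟩ := hex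
    have hle : Finsupp.single l 1 ≤ a := Finsupp.single_le_iff.2 (Nat.one_le_iff_ne_zero.2 hl)
    have hsum : a - Finsupp.single l 1 + Finsupp.single l 1 = a := tsub_add_cancel_of_le hle
    have hdeg : deg (a - Finsupp.single l 1) = d := by
      have := deg_add (a - Finsupp.single l 1) (Finsupp.single l 1)
      rw [hsum, deg_single, ha] at this
      omega
    obtain ⟨f', hf'⟩ := ih _ hdeg
    refine ⟨Fin.cons l f', ?_⟩
    rw [cnt, Fin.sum_univ_succ]
    simp only [Fin.cons_zero, Fin.cons_succ]
    rw [show (∑ i : Fin d, Finsupp.single (f' i) 1) = cnt f' from rfl, hf', add_comm, hsum]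

end PDaux

namespace PDaux
open MvPowerSeries
variable {n : ℕ}

noncomputable def slotOp {d : ℕ} (A : Matrix (Fin n) (Fin n) ℂ) (i : Fin d) :
    Module.End ℂ ((Fin d → Fin n) → ℂ) where
  toFun G := fun f => ∑ s, A s (f i) * G (Function.update f i s)
  map_add' G H := by
    funext f
    simp only [Pi.add_apply, mul_add, Finset.sum_add_distrib]
  map_smul' c G := by
    funext f
    simp only [Pi.smul_apply, smul_eq_mul, RingHom.id_apply, Finset.mul_sum]
    exact Finset.sum_congr rfl fun s _ => by ring

lemma slotOp_apply {d : ℕ} (A : Matrix (Fin n) (Fin n) ℂ) (i : Fin d) (G) (f) :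
    slotOp A i G f = ∑ s, A s (f i) * G (Function.update f i s) := rfl

lemma slotOp_pow {d : ℕ} (A : Matrix (Fin n) (Fin n) ℂ) (i : Fin d) (m : ℕ) (G) (f) :
    ((slotOp A i ^ m) G) f = ∑ s, (A ^ m) s (f i) * G (Function.update f i s) := by
  induction m generalizing G f with
  | zero =>
    rw [pow_zero, Module.End.one_apply]
    rw [Finset.sum_eq_single (f i)]
    · rw [pow_zero, Matrix.one_apply_eq, one_mul, Function.update_eq_self]
    · intro s _ hs
      rw [pow_zero, Matrix.one_apply_ne hs, zero_mul]
    · exact fun h => absurd (Finset.mem_univ _) h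
  | succ m ih =>
    rw [pow_succ, Module.End.mul_apply, ih]
    have : ∀ s, (slotOp A i G) (Function.update f i s) = ∑ t, A t s * G (Function.update f i t) := by
      intro s
      rw [slotOp_apply]
      refine Finset.sum_congr rfl fun t _ => ?_
      rw [Function.update_self, Function.update_idem]
    calc ∑ s, (A ^ m) s (f i) * (slotOp A i G) (Function.update f i s)
        = ∑ s, ∑ t, (A ^ m) s (f i) * (A t s * G (Function.update f i t)) := by
          refine Finset.sum_congr rfl fun s _ => ?_
          rw [this s, Finset.mul_sum]
      _ = ∑ t, ∑ s, (A ^ m) s (f i) * (A t s * G (Function.update f i t)) := Finset.sum_comm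
      _ = ∑ t, (A ^ (m + 1)) t (f i) * G (Function.update f i t) := by
          refine Finset.sum_congr rfl fun t _ => ?_
          rw [pow_succ', Matrix.mul_apply, Finset.sum_mul]
          refine Finset.sum_congr rfl fun s _ => by ring

lemma slotOp_nilpotent {d : ℕ} {A : Matrix (Fin n) (Fin n) ℂ} (hA : IsNilpotent A) (i : Fin d) :
    IsNilpotent (slotOp A i) := by
  obtain ⟨k, hk⟩ := hA
  refine ⟨k, ?_⟩
  refine LinearMap.ext fun G => funext fun f => ?_
  rw [LinearMap.zero_apply]
  rw [show ((slotOp A i ^ k) G) f = _ from slotOp_pow A i k G f, hk]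
  simp

lemma slotOp_commute {d : ℕ} (A : Matrix (Fin n) (Fin n) ℂ) (i i' : Fin d) :
    Commute (slotOp A i) (slotOp A i') := by
  rcases eq_or_ne i i' with rfl | hne
  · exact Commute.refl _
  rw [Commute, SemiconjBy]
  refine LinearMap.ext fun G => funext fun f => ?_
  rw [Module.End.mul_apply, Module.End.mul_apply, slotOp_apply, slotOp_apply]
  have expand : ∀ (j j' : Fin d), j ≠ j' → (∑ s, A s (f j) * (slotOp A j' G) (Function.update f j s))
      = ∑ s, ∑ t, A s (f j) * (A t (f j') * G (Function.update (Function.update f j s) j' t)) := by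
    intro j j' hjj'
    refine Finset.sum_congr rfl fun s _ => ?_
    rw [slotOp_apply, Finset.mul_sum]
    refine Finset.sum_congr rfl fun t _ => ?_
    rw [Function.update_of_ne (Ne.symm hjj') _ f]
  rw [expand i i' hne, expand i' i (Ne.symm hne)]
  rw [Finset.sum_comm]
  refine Finset.sum_congr rfl fun t _ => Finset.sum_congr rfl fun s _ => ?_
  rw [Function.update_comm hne]
  ring

lemma M_nilpotent {d : ℕ} {A : Matrix (Fin n) (Fin n) ℂ} (hA : IsNilpotent A) :
    IsNilpotent (∑ i : Fin d, slotOp (n := n) A i) :=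
  Commute.isNilpotent_sum (fun i _ => slotOp_nilpotent hA i)
    (fun i j _ _ => slotOp_commute A i j)

end PDaux

namespace PDaux
open MvPowerSeries
variable {n : ℕ}

lemma fact_move {a : Fin n →₀ ℕ} {l : Fin n} (hle : Finsupp.single l 1 ≤ a) (s : Fin n) :
    a l * fact (a - Finsupp.single l 1 + Finsupp.single s 1)
      = fact a * ((a - Finsupp.single l 1 : Fin n →₀ ℕ) s + 1) := by
  set b := a - Finsupp.single l 1 with hb
  have hba : b + Finsupp.single l 1 = a := tsub_add_cancel_of_le hle
  have hal : a l = b l + 1 := by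
    rw [← hba, Finsupp.add_apply, Finsupp.single_apply, if_pos rfl]
  have hfa : fact a = (b l + 1) * fact b := by rw [← hba, fact_add_single]
  rw [hal, hfa, fact_add_single]
  ring

lemma core {d : ℕ} (lam : Fin n → ℂ) (A : Matrix (Fin n) (Fin n) ℂ)
    (hnil : IsNilpotent A) (hAres : ∀ j l, A j l ≠ 0 → lam j = lam l)
    (c : ℂ) (hc : c ≠ 0) (v : (Fin n →₀ ℕ) → ℂ)
    (hrel : ∀ a : Fin n →₀ ℕ, deg a = d → wt lam a = c →
      c * v a + ∑ j, ∑ l, (if Finsupp.single l 1 ≤ a then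
        A j l * ((((a - Finsupp.single l 1 : Fin n →₀ ℕ) j + 1 : ℕ) : ℂ)
          * v (a - Finsupp.single l 1 + Finsupp.single j 1)) else 0) = 0) :
    ∀ a, deg a = d → wt lam a = c → v a = 0 := by
  classical
  set G : (Fin d → Fin n) → ℂ :=
    fun f => if wt lam (cnt f) = c then (fact (cnt f) : ℂ) * v (cnt f) else 0 with hGdef
  have happ : ∀ f, ((∑ i : Fin d, slotOp (n := n) A i) G) f
      = ∑ i, ∑ s, A s (f i) * G (Function.update f i s) := by
    intro f
    rw [LinearMap.sum_apply, Finset.sum_apply]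
    exact Finset.sum_congr rfl fun i _ => rfl
  -- the weight of cnt (update f i s) equals that of cnt f when lam s = lam (f i)
  have hwt_update : ∀ (f : Fin d → Fin n) (i : Fin d) (s : Fin n), lam s = lam (f i) →
      wt lam (cnt (Function.update f i s)) = wt lam (cnt f) := by
    intro f i s hls
    rw [cnt_update, cnt_decomp f i, wt_add, wt_add, wt_single, wt_single, hls]
  have hcnt_upd : ∀ (f : Fin d → Fin n) (i : Fin d) (s : Fin n),
      cnt (Function.update f i s) = cnt f - Finsupp.single (f i) 1 + Finsupp.single s 1 := by
    intro f i s
    have hdec := cnt_decomp f i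
    have hrest : cnt f - Finsupp.single (f i) 1 = ∑ i' ∈ univ.erase i, Finsupp.single (f i') 1 := by
      rw [hdec, add_tsub_cancel_left]
    rw [cnt_update, hrest, add_comm]
  have key : (∑ i : Fin d, slotOp (n := n) A i) G = (-c) • G := by
    funext f
    rw [happ f, Pi.smul_apply, smul_eq_mul]
    by_cases hwa : wt lam (cnt f) = c
    · -- main case
      have hGf : G f = (fact (cnt f) : ℂ) * v (cnt f) := by
        simp only [hGdef]; rw [if_pos hwa]
      set a := cnt f with ha
      have hstep1 : ∀ (i : Fin d) (s : Fin n), A s (f i) * G (Function.update f i s)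
          = A s (f i) * ((fact (a - Finsupp.single (f i) 1 + Finsupp.single s 1) : ℂ)
            * v (a - Finsupp.single (f i) 1 + Finsupp.single s 1)) := by
        intro i s
        by_cases hA0 : A s (f i) = 0
        · rw [hA0, zero_mul, zero_mul]
        · have hwu : wt lam (cnt (Function.update f i s)) = c := by
            rw [hwt_update f i s (hAres s (f i) hA0)]; exact hwa
          simp only [hGdef]
          simp only [hcnt_upd f i s, ← ha] at hwu ⊢
          rw [if_pos hwu]
      have hLHS1 : ∑ i, ∑ s, A s (f i) * G (Function.update f i s)
          = ∑ i, ∑ s, A s (f i) * ((fact (a - Finsupp.single (f i) 1 + Finsupp.single s 1) : ℂ)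
            * v (a - Finsupp.single (f i) 1 + Finsupp.single s 1)) :=
        Finset.sum_congr rfl fun i _ => Finset.sum_congr rfl fun s _ => hstep1 i s
      set h : Fin n → ℂ := fun l => ∑ s, A s l
          * ((fact (a - Finsupp.single l 1 + Finsupp.single s 1) : ℂ)
            * v (a - Finsupp.single l 1 + Finsupp.single s 1)) with hhdef
      have hLHS2 : ∑ i, ∑ s, A s (f i) * ((fact (a - Finsupp.single (f i) 1 + Finsupp.single s 1) : ℂ)
            * v (a - Finsupp.single (f i) 1 + Finsupp.single s 1)) = ∑ i, h (f i) := rfl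
      have hcast : ∀ l, (a l : ℂ) = ∑ i, if f i = l then (1 : ℂ) else 0 := by
        intro l
        rw [ha, cnt_apply]
        push_cast
        exact Finset.sum_congr rfl fun i _ => by split_ifs <;> simp
      have hLHS3 : ∑ i, h (f i) = ∑ l, (a l : ℂ) * h l := by
        calc ∑ i, h (f i) = ∑ i, ∑ l, if f i = l then h l else 0 := by
              refine Finset.sum_congr rfl fun i _ => ?_
              rw [Finset.sum_ite_eq univ (f i) h, if_pos (Finset.mem_univ _)]
          _ = ∑ l, ∑ i, if f i = l then h l else 0 := Finset.sum_comm
          _ = ∑ l, (a l : ℂ) * h l := by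
              refine Finset.sum_congr rfl fun l _ => ?_
              rw [hcast l, Finset.sum_mul]
              refine Finset.sum_congr rfl fun i _ => by split_ifs <;> ring
      have hterm : ∀ l, (a l : ℂ) * h l = (fact a : ℂ) * ∑ s, (if Finsupp.single l 1 ≤ a then
          A s l * ((((a - Finsupp.single l 1 : Fin n →₀ ℕ) s + 1 : ℕ) : ℂ)
            * v (a - Finsupp.single l 1 + Finsupp.single s 1)) else 0) := by
        intro l
        rw [hhdef, Finset.mul_sum, Finset.mul_sum]
        refine Finset.sum_congr rfl fun s _ => ?_
        by_cases hle : Finsupp.single l 1 ≤ a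
        · rw [if_pos hle]
          have hid := fact_move hle s
          have hidC : (a l : ℂ) * (fact (a - Finsupp.single l 1 + Finsupp.single s 1) : ℂ)
              = (fact a : ℂ) * (((a - Finsupp.single l 1 : Fin n →₀ ℕ) s + 1 : ℕ) : ℂ) := by
            exact_mod_cast congrArg (Nat.cast : ℕ → ℂ) hid
          calc (a l : ℂ) * (A s l * ((fact (a - Finsupp.single l 1 + Finsupp.single s 1) : ℂ)
                * v (a - Finsupp.single l 1 + Finsupp.single s 1)))
              = ((a l : ℂ) * (fact (a - Finsupp.single l 1 + Finsupp.single s 1) : ℂ))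
                * (A s l * v (a - Finsupp.single l 1 + Finsupp.single s 1)) := by ring
            _ = ((fact a : ℂ) * (((a - Finsupp.single l 1 : Fin n →₀ ℕ) s + 1 : ℕ) : ℂ))
                * (A s l * v (a - Finsupp.single l 1 + Finsupp.single s 1)) := by rw [hidC]
            _ = (fact a : ℂ) * (A s l * ((((a - Finsupp.single l 1 : Fin n →₀ ℕ) s + 1 : ℕ) : ℂ)
                * v (a - Finsupp.single l 1 + Finsupp.single s 1))) := by ring
        · rw [if_neg hle, mul_zero]
          have hal : a l = 0 := by
            by_contra hne
            exact hle (Finsupp.single_le_iff.2 (Nat.one_le_iff_ne_zero.2 hne))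
          rw [hal]
          simp
      have hrel' := hrel a (deg_cnt f) hwa
      have hS : ∑ j, ∑ l, (if Finsupp.single l 1 ≤ a then
          A j l * ((((a - Finsupp.single l 1 : Fin n →₀ ℕ) j + 1 : ℕ) : ℂ)
            * v (a - Finsupp.single l 1 + Finsupp.single j 1)) else 0) = -(c * v a) := by
        linear_combination hrel'
      calc ∑ i, ∑ s, A s (f i) * G (Function.update f i s)
          = ∑ l, (a l : ℂ) * h l := by rw [hLHS1, hLHS2, hLHS3]
        _ = (fact a : ℂ) * ∑ l, ∑ s, (if Finsupp.single l 1 ≤ a then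
              A s l * ((((a - Finsupp.single l 1 : Fin n →₀ ℕ) s + 1 : ℕ) : ℂ)
                * v (a - Finsupp.single l 1 + Finsupp.single s 1)) else 0) := by
            rw [Finset.mul_sum]
            exact Finset.sum_congr rfl fun l _ => hterm l
        _ = (fact a : ℂ) * ∑ s, ∑ l, (if Finsupp.single l 1 ≤ a then
              A s l * ((((a - Finsupp.single l 1 : Fin n →₀ ℕ) s + 1 : ℕ) : ℂ)
                * v (a - Finsupp.single l 1 + Finsupp.single s 1)) else 0) := by
            rw [Finset.sum_comm]
        _ = (fact a : ℂ) * -(c * v a) := by rw [hS]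
        _ = -c * G f := by rw [hGf]; ring
    · -- off-weight case
      have hGf : G f = 0 := by simp only [hGdef]; rw [if_neg hwa]
      rw [hGf, mul_zero]
      refine Finset.sum_eq_zero fun i _ => Finset.sum_eq_zero fun s _ => ?_
      by_cases hA0 : A s (f i) = 0
      · rw [hA0, zero_mul]
      · have hwu : wt lam (cnt (Function.update f i s)) ≠ c := by
          rw [hwt_update f i s (hAres s (f i) hA0)]; exact hwa
        simp only [hGdef]
        rw [if_neg hwu, mul_zero]
  obtain ⟨m, hm⟩ := M_nilpotent (d := d) hnil
  have hpow : ∀ m' : ℕ, ((∑ i : Fin d, slotOp (n := n) A i) ^ m') G = ((-c) ^ m') • G := by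
    intro m'
    induction m' with
    | zero => simp
    | succ m' ih =>
      rw [pow_succ, Module.End.mul_apply, key, map_smul, ih, smul_smul, ← pow_succ']
  have hzero : ((-c) ^ m) • G = 0 := by
    rw [← hpow m, hm, LinearMap.zero_apply]
  have hG0 : G = 0 := by
    have hcm : (-c) ^ m ≠ 0 := pow_ne_zero _ (neg_ne_zero.2 hc)
    rcases smul_eq_zero.1 hzero with hh | hh
    · exact absurd hh hcm
    · exact hh
  intro a hd hwt
  obtain ⟨f, hf⟩ := exists_tuple d a hd
  have hGf := congrFun hG0 f
  rw [hGdef] at hGf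
  simp only [hf, Pi.zero_apply] at hGf
  rw [if_pos hwt] at hGf
  rcases mul_eq_zero.1 hGf with hh | hh
  · exact absurd hh (Nat.cast_ne_zero.2 (fact_ne_zero a))
  · exact hh

end PDaux

namespace PDaux
open MvPowerSeries
variable {n : ℕ}

lemma tsub_single_apply {a : Fin n →₀ ℕ} {j : Fin n} (h : Finsupp.single j 1 ≤ a) :
    (a - Finsupp.single j 1 : Fin n →₀ ℕ) j + 1 = a j := by
  have h1 : (1:ℕ) ≤ a j := by simpa [Finsupp.single_le_iff] using h
  rw [Finsupp.tsub_apply, Finsupp.single_apply, if_pos rfl]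
  omega

lemma key_relation {lam : Fin n → ℂ} {Xf : Fin n → MvPowerSeries (Fin n) ℂ}
    {A : Matrix (Fin n) (Fin n) ℂ} {β : MvPowerSeries (Fin n) ℂ}
    (hconst : ∀ j, MvPowerSeries.coeff (R := ℂ) 0 (Xf j) = 0)
    (hlin : ∀ j l, MvPowerSeries.coeff (R := ℂ) (Finsupp.single l 1) (Xf j)
      = (if l = j then lam j else 0) + A j l)
    (hres : ∀ j a, wt lam a ≠ lam j → MvPowerSeries.coeff (R := ℂ) a (Xf j) = 0)
    {d : ℕ}
    (IH : ∀ q : Fin n →₀ ℕ, deg q < d → wt lam q ≠ 0 → MvPowerSeries.coeff (R := ℂ) q β = 0)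
    (a : Fin n →₀ ℕ) (hd : deg a = d) (hw : wt lam a ≠ 0) :
    MvPowerSeries.coeff (R := ℂ) a (vfApply Xf β)
      = wt lam a * MvPowerSeries.coeff (R := ℂ) a β + ∑ j, ∑ l, (if Finsupp.single l 1 ≤ a then
          A j l * ((((a - Finsupp.single l 1 : Fin n →₀ ℕ) j + 1 : ℕ) : ℂ)
            * MvPowerSeries.coeff (R := ℂ) (a - Finsupp.single l 1 + Finsupp.single j 1) β) else 0) := by
  classical
  set T : Fin n → (Fin n →₀ ℕ) × (Fin n →₀ ℕ) → ℂ := fun j x =>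
    MvPowerSeries.coeff (R := ℂ) x.1 (Xf j)
      * (((x.2 j + 1 : ℕ) : ℂ) * MvPowerSeries.coeff (R := ℂ) (x.2 + Finsupp.single j 1) β) with hT
  have step0 : MvPowerSeries.coeff (R := ℂ) a (vfApply Xf β)
      = ∑ j, ∑ x ∈ Finset.HasAntidiagonal.antidiagonal a, T j x := by
    rw [coeff_vfApply]
    refine Finset.sum_congr rfl fun j _ => ?_
    rw [MvPowerSeries.coeff_mul]
    exact Finset.sum_congr rfl fun x _ => by rw [hT, coeff_psPderiv]
  -- each term is supported on x.1 a single
  have claim1 : ∀ j, ∀ x ∈ Finset.HasAntidiagonal.antidiagonal a,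
      T j x = ∑ l, if x.1 = Finsupp.single l 1 then T j x else 0 := by
    intro j x hx
    have hmem : x.1 + x.2 = a := Finset.HasAntidiagonal.mem_antidiagonal.1 hx
    by_cases hex : ∃ l, x.1 = Finsupp.single l 1
    · obtain ⟨l, hl⟩ := hex
      rw [Finset.sum_eq_single l]
      · rw [if_pos hl]
      · intro l' _ hl'
        rw [if_neg]
        rw [hl]
        intro hcon
        exact hl' (Finsupp.single_left_injective one_ne_zero hcon).symm
      · exact fun hcon => absurd (Finset.mem_univ l) hcon
    · push_neg at hex
      symm
      rw [Finset.sum_eq_zero fun l _ => if_neg (hex l)]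
      -- show T j x = 0
      by_cases hwm : wt lam x.1 = lam j
      · -- the β coefficient vanishes
        have hdeg : deg x.1 + deg x.2 = d := by rw [← deg_add, hmem, hd]
        have hwt : wt lam x.1 + wt lam x.2 = wt lam a := by rw [← wt_add, hmem]
        rcases Nat.lt_or_ge (deg x.1) 2 with hdlt | hdge
        · interval_cases hm : deg x.1
          · rw [hT]
            simp only [deg_eq_zero hm, hconst j, zero_mul]
          · exact absurd (eq_single_of_deg_one hm) (by simpa using hex)
        · have hlt : deg (x.2 + Finsupp.single j 1) < d := by
            rw [deg_add, deg_single]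
            omega
          have hwne : wt lam (x.2 + Finsupp.single j 1) ≠ 0 := by
            rw [wt_add, wt_single]
            intro hcon
            apply hw
            rw [← hwt, hwm]
            linear_combination hcon
          rw [hT]
          simp only [IH _ hlt hwne, mul_zero]
      · rw [hT]
        simp only [hres j x.1 hwm, zero_mul]
  have step1 : ∀ j, ∑ x ∈ Finset.HasAntidiagonal.antidiagonal a, T j x
      = ∑ l, if Finsupp.single l 1 ≤ a then T j (Finsupp.single l 1, a - Finsupp.single l 1)
          else 0 := by
    intro j
    calc ∑ x ∈ Finset.HasAntidiagonal.antidiagonal a, T j x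
        = ∑ x ∈ Finset.HasAntidiagonal.antidiagonal a, ∑ l, (if x.1 = Finsupp.single l 1 then T j x else 0) :=
          Finset.sum_congr rfl (claim1 j)
      _ = ∑ l, ∑ x ∈ Finset.HasAntidiagonal.antidiagonal a, (if x.1 = Finsupp.single l 1 then T j x else 0) :=
          Finset.sum_comm
      _ = ∑ l, if Finsupp.single l 1 ≤ a then T j (Finsupp.single l 1, a - Finsupp.single l 1)
            else 0 := by
          refine Finset.sum_congr rfl fun l _ => ?_
          by_cases hle : Finsupp.single l 1 ≤ a
          · rw [if_pos hle, Finset.sum_eq_single (Finsupp.single l 1, a - Finsupp.single l 1)]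
            · rw [if_pos rfl]
            · intro x hx hne
              have hmem : x.1 + x.2 = a := Finset.HasAntidiagonal.mem_antidiagonal.1 hx
              rw [if_neg]
              intro h1
              apply hne
              have h2 : x.2 = a - Finsupp.single l 1 := by
                rw [← h1, ← hmem, add_tsub_cancel_left]
              exact Prod.ext h1 h2
            · intro hcon
              exfalso
              apply hcon
              rw [Finset.HasAntidiagonal.mem_antidiagonal, add_tsub_cancel_of_le hle]
          · rw [if_neg hle, Finset.sum_eq_zero]
            intro x hx
            rw [if_neg]
            intro h1
            apply hle
            have hmem : x.1 + x.2 = a := Finset.HasAntidiagonal.mem_antidiagonal.1 hx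
            rw [← hmem, ← h1]
            exact self_le_add_right _ _
  have step2 : ∀ j l, (if Finsupp.single l 1 ≤ a then
        T j (Finsupp.single l 1, a - Finsupp.single l 1) else 0)
      = (if Finsupp.single l 1 ≤ a then (if l = j then lam j else 0)
          * ((((a - Finsupp.single l 1 : Fin n →₀ ℕ) j + 1 : ℕ) : ℂ)
            * MvPowerSeries.coeff (R := ℂ) (a - Finsupp.single l 1 + Finsupp.single j 1) β) else 0)
        + (if Finsupp.single l 1 ≤ a then A j l
          * ((((a - Finsupp.single l 1 : Fin n →₀ ℕ) j + 1 : ℕ) : ℂ)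
            * MvPowerSeries.coeff (R := ℂ) (a - Finsupp.single l 1 + Finsupp.single j 1) β) else 0) := by
    intro j l
    by_cases hle : Finsupp.single l 1 ≤ a
    · rw [if_pos hle, if_pos hle, if_pos hle, hT]
      simp only [hlin j l]
      ring
    · rw [if_neg hle, if_neg hle, if_neg hle, add_zero]
  have step3 : ∑ j, (if Finsupp.single j 1 ≤ a then lam j
        * ((((a - Finsupp.single j 1 : Fin n →₀ ℕ) j + 1 : ℕ) : ℂ)
          * MvPowerSeries.coeff (R := ℂ) (a - Finsupp.single j 1 + Finsupp.single j 1) β) else 0)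
      = wt lam a * MvPowerSeries.coeff (R := ℂ) a β := by
    rw [wt, Finset.sum_mul]
    refine Finset.sum_congr rfl fun j _ => ?_
    by_cases hle : Finsupp.single j 1 ≤ a
    · rw [if_pos hle, tsub_add_cancel_of_le hle, tsub_single_apply hle]
      ring
    · rw [if_neg hle]
      have h0 : a j = 0 := by
        by_contra hne
        exact hle (Finsupp.single_le_iff.2 (Nat.one_le_iff_ne_zero.2 hne))
      rw [h0]
      simp
  -- assemble
  rw [step0]
  rw [Finset.sum_congr rfl fun j _ => step1 j]
  rw [Finset.sum_congr rfl fun j _ => Finset.sum_congr rfl fun l (_ : l ∈ univ) => step2 j l]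
  rw [Finset.sum_congr rfl fun j (_ : (j : Fin n) ∈ univ) => Finset.sum_add_distrib]
  rw [Finset.sum_add_distrib]
  congr 1
  · rw [← step3]
    refine Finset.sum_congr rfl fun j _ => ?_
    rw [Finset.sum_eq_single j]
    · rw [if_pos rfl]
    · intro l _ hl
      by_cases hle : Finsupp.single l 1 ≤ a
      · rw [if_pos hle, if_neg hl, zero_mul]
      · rw [if_neg hle]
    · exact fun hcon => absurd (Finset.mem_univ j) hcon

end PDaux

/-- If `X` is in Poincaré–Dulac normal form with semisimple linear part `S_λ`, then for
any formal power series `β`, `S_λ(X(β)) = 0` implies `S_λ(β) = 0`. -/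
theorem semisimple_kernel_of_composition {n : ℕ} (lam : Fin n → ℂ)
    (Xf : Fin n → MvPowerSeries (Fin n) ℂ) (hPD : IsPDNormalForm lam Xf) :
    ∀ β : MvPowerSeries (Fin n) ℂ,
      vfApply (diagVF lam) (vfApply Xf β) = 0 → vfApply (diagVF lam) β = 0 := by
  classical
  intro β hβ
  obtain ⟨hconst, ⟨A, hnilA, hcommA, hlin⟩, hLie⟩ := hPD
  have hres := PDaux.resonance hLie
  have hAres := PDaux.A_resonance hcommA
  have H1 : ∀ a : Fin n →₀ ℕ, PDaux.wt lam a ≠ 0 →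
      MvPowerSeries.coeff (R := ℂ) a (vfApply Xf β) = 0 := by
    intro a hw
    have h := congrArg (MvPowerSeries.coeff (R := ℂ) a) hβ
    rw [PDaux.coeff_S, map_zero] at h
    rcases mul_eq_zero.1 h with h | h
    · exact absurd h hw
    · exact h
  have main : ∀ d : ℕ, ∀ a : Fin n →₀ ℕ, PDaux.deg a = d → PDaux.wt lam a ≠ 0 →
      MvPowerSeries.coeff (R := ℂ) a β = 0 := by
    intro d
    induction d using Nat.strong_induction_on with
    | _ d IH =>
      intro a hd hw
      have IH' : ∀ q : Fin n →₀ ℕ, PDaux.deg q < d → PDaux.wt lam q ≠ 0 →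
          MvPowerSeries.coeff (R := ℂ) q β = 0 := fun q hq hwq => IH _ hq q rfl hwq
      refine PDaux.core lam A hnilA hAres (PDaux.wt lam a) hw
        (fun q => MvPowerSeries.coeff (R := ℂ) q β) ?_ a hd rfl
      intro a' hd' hw'
      have hwa' : PDaux.wt lam a' ≠ 0 := by rw [hw']; exact hw
      have hkey := PDaux.key_relation hconst hlin hres IH' a' hd' hwa'
      rw [H1 a' hwa', hw'] at hkey
      exact hkey.symm
  refine MvPowerSeries.ext fun a => ?_
  rw [PDaux.coeff_S, map_zero]
  by_cases hw : PDaux.wt lam a = 0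
  · rw [hw, zero_mul]
  · rw [main (PDaux.deg a) a rfl hw, mul_zero]
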